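/- Let d be an integer with d ≥ 2 and let A be a 2×2 integer matrix with determinant d such that 1 is an eigenvalue of A, i.e. det(A - I) = 0. Then there exist a 2×2 integer matrix U with det U = 1 and an integer c with 0 ≤ c ≤ d - 2 such that U⁻¹ * A * U is the upper triangular matrix with first row (d, c) and second row (0, 1). -/

import Mathlib

/-- A primitive kernel vector for a row `(p, q)` that also kills any
proportional row `(r, s)`. -/
lemma aux_row (p q : ℤ) (hne : ¬(p = 0 ∧ q = 0)) :
    ∃ x y : ℤ, IsCoprime x y ∧ p * x + q * y = 0 ∧
      ∀ r s : ℤ, p * s = q * r → r * x + s * y = 0 := by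
  have hgpos : 0 < Int.gcd p q := Int.gcd_pos_iff.mpr (by tauto)
  set g : ℤ := (Int.gcd p q : ℤ) with hg
  have hgp : g ∣ p := Int.gcd_dvd_left p q
  have hgq : g ∣ q := Int.gcd_dvd_right p q
  refine ⟨q / g, -(p / g), ?_, ?_, ?_⟩
  · rw [Int.isCoprime_iff_gcd_eq_one]
    have h1 : Int.gcd (p / g) (q / g) = 1 := Int.gcd_div_gcd_div_gcd hgpos
    simpa [Int.gcd, Int.natAbs_neg, Nat.gcd_comm] using h1
  · have h1 : p * (q / g) = p * q / g := (Int.mul_ediv_assoc p hgq).symm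
    have h2 : q * (p / g) = q * p / g := (Int.mul_ediv_assoc q hgp).symm
    rw [mul_neg, h1, h2, mul_comm p q]
    ring
  · intro r s hrs
    have h1 : r * (q / g) = r * q / g := (Int.mul_ediv_assoc r hgq).symm
    have h2 : s * (p / g) = s * p / g := (Int.mul_ediv_assoc s hgp).symm
    have h3 : r * q = s * p := by linarith [hrs]
    rw [mul_neg, h1, h2, h3]
    ring

theorem stmt_1 (d : ℤ) (hd : 2 ≤ d) (A : Matrix (Fin 2) (Fin 2) ℤ)
    (hdet : A.det = d) (heig : (A - 1).det = 0) :
    ∃ (U : Matrix (Fin 2) (Fin 2) ℤ) (c : ℤ),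
      U.det = 1 ∧ 0 ≤ c ∧ c ≤ d - 2 ∧ U⁻¹ * A * U = !![d, c; 0, 1] := by
  set a := A 0 0 with ha
  set b := A 0 1 with hb
  set f := A 1 0 with hf
  set e := A 1 1 with he
  have hD : a * e - b * f = d := by
    rw [Matrix.det_fin_two] at hdet; exact hdet
  have hE : (a - 1) * (e - 1) - b * f = 0 := by
    rw [Matrix.det_fin_two] at heig
    simpa [Matrix.sub_apply, Matrix.one_apply] using heig
  have htr : a + e = d + 1 := by nlinarith [hD, hE]
  -- Find a primitive eigenvector (x, y) for eigenvalue d.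
  have hkey : ∃ x y : ℤ, IsCoprime x y ∧ (a - d) * x + b * y = 0 ∧
      f * x + (e - d) * y = 0 := by
    by_cases h1 : (a - d) = 0 ∧ b = 0
    · by_cases h2 : f = 0 ∧ (e - d) = 0
      · exfalso; obtain ⟨h1a, h1b⟩ := h1; obtain ⟨h2a, h2b⟩ := h2; nlinarith
      · obtain ⟨x, y, hco, hrow, hall⟩ := aux_row f (e - d) h2
        refine ⟨x, y, hco, ?_, hrow⟩
        have := hall (a - d) b (by nlinarith)
        linarith
    · obtain ⟨x, y, hco, hrow, hall⟩ := aux_row (a - d) b h1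
      refine ⟨x, y, hco, hrow, ?_⟩
      have := hall f (e - d) (by nlinarith)
      linarith
  obtain ⟨x, y, hco, hE1, hE2⟩ := hkey
  obtain ⟨uu, vv, hbez0⟩ := hco
  -- second column of the base matrix
  set u : ℤ := -vv with hu
  set v : ℤ := uu with hv
  have hZ : x * v - y * u = 1 := by rw [hu, hv]; linarith [hbez0]
  set α : ℤ := v * (a * u + b * v) - u * (f * u + e * v) with hα
  have hdβ : d * (-y * (a * u + b * v) + x * (f * u + e * v)) = d := by
    linear_combination (-(f * u + e * v)) * hE1 + (a * u + b * v) * hE2 +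
      (x * v - y * u) * hD + d * hZ
  have hd0 : d ≠ 0 := by omega
  have hβ : (-y * (a * u + b * v) + x * (f * u + e * v)) = 1 :=
    mul_left_cancel₀ hd0 (by rw [hdβ, mul_one])
  have hcol1 : a * u + b * v = x * α + u := by
    rw [hα]; linear_combination (-(a * u + b * v)) * hZ + u * hβ
  have hcol2 : f * u + e * v = y * α + v := by
    rw [hα]; linear_combination (-(f * u + e * v)) * hZ + v * hβ
  -- normalize c
  set t : ℤ := -(α / (d - 1)) with ht
  set c : ℤ := α % (d - 1) with hc
  have hcdef : c = α + (d - 1) * t := by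
    rw [hc, ht, Int.emod_def]; ring
  set U : Matrix (Fin 2) (Fin 2) ℤ := !![x, u + t * x; y, v + t * y] with hU
  have hUdet : U.det = 1 := by
    rw [hU, Matrix.det_fin_two_of]; linear_combination hZ
  have hAU : A * U = U * !![d, c; 0, 1] := by
    ext i j
    fin_cases i <;> fin_cases j <;>
      simp [hU, Matrix.mul_apply, Fin.sum_univ_succ, ← ha, ← hb, ← hf, ← he]
    · linear_combination hE1
    · linear_combination hcol1 + t * hE1 - x * hcdef
    · linear_combination hE2
    · linear_combination hcol2 + t * hE2 - y * hcdef
  refine ⟨U, c, hUdet, ?_, ?_, ?_⟩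
  · exact Int.emod_nonneg α (by omega)
  · have := Int.emod_lt_of_pos α (show (0:ℤ) < d - 1 by omega)
    omega
  · have hUu : IsUnit U.det := by rw [hUdet]; exact isUnit_one
    calc U⁻¹ * A * U = U⁻¹ * (A * U) := by rw [mul_assoc]
      _ = U⁻¹ * (U * !![d, c; 0, 1]) := by rw [hAU]
      _ = (U⁻¹ * U) * !![d, c; 0, 1] := by rw [mul_assoc]
      _ = !![d, c; 0, 1] := by rw [Matrix.nonsing_inv_mul U hUu, one_mul]
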